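/- Let t1(λ) = μ*(λ - 1)/(2*λ^(3/2)) for λ > 0 and μ > 0. Then t1(2) = t1(3 + √5), i.e., the function t1 is not injective on (0, ∞). -/

import Mathlib

theorem stmt_3 (μ : ℝ) (hμ : 0 < μ) (t1 : ℝ → ℝ)
    (ht1 : ∀ l : ℝ, 0 < l → t1 l = μ * (l - 1) / (2 * l ^ ((3 : ℝ) / 2))) :
    t1 2 = t1 (3 + Real.sqrt 5) ∧ ¬ Set.InjOn t1 (Set.Ioi 0) := by
  have h5 : Real.sqrt 5 ^ 2 = 5 := Real.sq_sqrt (by norm_num)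
  have h5pos : 0 < Real.sqrt 5 := Real.sqrt_pos.mpr (by norm_num)
  have h2 : Real.sqrt 2 ^ 2 = 2 := Real.sq_sqrt (by norm_num)
  have h2pos : 0 < Real.sqrt 2 := Real.sqrt_pos.mpr (by norm_num)
  have hxpos : (0:ℝ) < 3 + Real.sqrt 5 := by positivity
  have hs : Real.sqrt (3 + Real.sqrt 5) = (1 + Real.sqrt 5) / Real.sqrt 2 := by
    rw [show (3 + Real.sqrt 5 : ℝ) = ((1 + Real.sqrt 5) / Real.sqrt 2) ^ 2 by
      field_simp; nlinarith [h5, h2]]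
    exact Real.sqrt_sq (by positivity)
  have key : ∀ x : ℝ, 0 < x → x ^ ((3:ℝ)/2) = Real.sqrt x ^ 3 := by
    intro x hx
    rw [Real.sqrt_eq_rpow, ← Real.rpow_natCast (x ^ ((1:ℝ)/2)) 3,
      ← Real.rpow_mul hx.le]
    norm_num
  have e1 : t1 2 = μ * 1 / (2 * Real.sqrt 2 ^ 3) := by
    rw [ht1 2 (by norm_num), key 2 (by norm_num)]; norm_num
  have e2 : t1 (3 + Real.sqrt 5)
      = μ * (2 + Real.sqrt 5) / (2 * ((1 + Real.sqrt 5) / Real.sqrt 2) ^ 3) := by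
    rw [ht1 _ hxpos, key _ hxpos, hs]; ring_nf
  have heq : t1 2 = t1 (3 + Real.sqrt 5) := by
    rw [e1, e2]
    rw [div_eq_div_iff (by positivity) (by positivity)]
    field_simp
    have h8 : Real.sqrt 2 ^ 3 * Real.sqrt 2 ^ 3 = 8 := by
      rw [← pow_add]
      rw [show (3+3 : ℕ) = 2*3 from rfl, pow_mul, h2]; norm_num
    have hc : (1 + Real.sqrt 5) ^ 3 = 16 + 8 * Real.sqrt 5 := by
      linear_combination (Real.sqrt 5 + 3) * h5
    rw [hc]
    linear_combination (-(Real.sqrt 5) - 2) * h8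
  refine ⟨heq, fun hinj => ?_⟩
  have hne : (2:ℝ) ≠ 3 + Real.sqrt 5 := by nlinarith [h5pos]
  exact hne (hinj (by norm_num : (2:ℝ) ∈ Set.Ioi 0) (Set.mem_Ioi.mpr hxpos) heq)
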